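/- Let μ₁, μ₂ ∈ ℝ and σ₁, σ₂ > 0, and for j, k ∈ ℤ define μ(j,k), σ̄, and w(j,k) as follows: μ(j,k) = ((μ₁ + 2πj) σ₂² + (μ₂ + 2πk) σ₁²)/(σ₁² + σ₂²), σ̄ = √(σ₁² σ₂² / (σ₁² + σ₂²)), w(j,k) = exp(−((μ₁ + 2πj) − (μ₂ + 2πk))² / (2(σ₁² + σ₂²))) / √(2π(σ₁² + σ₂²)). Then ∫_0^{2π} exp(i x) f_WN(x; μ₁, σ₁) f_WN(x; μ₂, σ₂) dx = ∑_{j,k ∈ ℤ} w(j,k) ∫_0^{2π} exp(i x) N(x; μ(j,k), σ̄) dx. -/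

import Mathlib

open MeasureTheory Real
open scoped ENNReal NNReal

/-- Wrapped normal density with location `μ` and concentration `σ`. -/
noncomputable def wnDensity (μ σ x : ℝ) : ℝ :=
  (1 / (Real.sqrt (2 * Real.pi) * σ)) *
    ∑' k : ℤ, Real.exp (-(x - μ + 2 * Real.pi * (k : ℝ)) ^ 2 / (2 * σ ^ 2))

/-- One-dimensional Gaussian density with mean `μ` and standard deviation `σ`. -/
noncomputable def gaussDensity (μ σ x : ℝ) : ℝ :=
  (1 / (Real.sqrt (2 * Real.pi) * σ)) * Real.exp (-(x - μ) ^ 2 / (2 * σ ^ 2))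

lemma summable_aux (C : ℝ) {D : ℝ} (hD : 0 < D) :
    Summable fun n : ℤ => Real.exp (C * |(n : ℝ)| - D * (n : ℝ) ^ 2) := by
  have h := summable_pow_mul_jacobiTheta₂_term_bound (C / (2 * π)) (T := D / π)
    (by positivity) 0
  refine h.congr fun n => ?_
  have hπ := Real.pi_pos
  rw [pow_zero, one_mul]
  congr 1
  push_cast
  field_simp
  ring

lemma exp_term_le {a R : ℝ} (hR : |a| ≤ R) {σ : ℝ} (hσ : 0 < σ) (t : ℝ) :
    Real.exp (-(a + 2 * π * t) ^ 2 / (2 * σ ^ 2)) ≤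
      Real.exp ((2 * π * R / σ ^ 2) * |t| - (2 * π ^ 2 / σ ^ 2) * t ^ 2) := by
  have hπ := Real.pi_pos
  apply Real.exp_le_exp.mpr
  have h2 : -(a * t) ≤ |a| * |t| := by rw [← abs_mul]; exact neg_le_abs _
  have h3 : |a| * |t| ≤ R * |t| := mul_le_mul_of_nonneg_right hR (abs_nonneg _)
  have h1 : -(a + 2 * π * t) ^ 2 ≤ 4 * π * R * |t| - 4 * π ^ 2 * t ^ 2 := by
    nlinarith [mul_le_mul_of_nonneg_left (h2.trans h3) (by positivity : (0:ℝ) ≤ 4 * π),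
      sq_nonneg a]
  have he : (2 * π * R / σ ^ 2) * |t| - (2 * π ^ 2 / σ ^ 2) * t ^ 2 =
      (4 * π * R * |t| - 4 * π ^ 2 * t ^ 2) / (2 * σ ^ 2) := by
    field_simp; ring
  rw [he]
  gcongr

lemma summable_sub (μ σ x : ℝ) (hσ : 0 < σ) :
    Summable fun k : ℤ => Real.exp (-(x - (μ + 2 * π * (k : ℝ))) ^ 2 / (2 * σ ^ 2)) := by
  refine Summable.of_nonneg_of_le (fun _ => (Real.exp_pos _).le) (fun k => ?_)
    (summable_aux (2 * π * |x - μ| / σ ^ 2) (D := 2 * π ^ 2 / σ ^ 2) (by positivity))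
  have h := exp_term_le (a := x - μ) (R := |x - μ|) le_rfl hσ (-(k : ℝ))
  simpa [abs_neg, neg_sq, show x - (μ + 2 * π * (k:ℝ)) = (x - μ) + 2 * π * (-(k:ℝ)) by ring]
    using h

lemma summable_wn_term (μ σ x : ℝ) (hσ : 0 < σ) :
    Summable fun k : ℤ => Real.exp (-(x - μ + 2 * π * (k : ℝ)) ^ 2 / (2 * σ ^ 2)) := by
  refine Summable.of_nonneg_of_le (fun _ => (Real.exp_pos _).le) (fun k => ?_)
    (summable_aux (2 * π * |x - μ| / σ ^ 2) (D := 2 * π ^ 2 / σ ^ 2) (by positivity))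
  have h := exp_term_le (a := x - μ) (R := |x - μ|) le_rfl hσ ((k : ℝ))
  simpa [show x - μ + 2 * π * (k:ℝ) = (x - μ) + 2 * π * ((k:ℝ)) by ring] using h


lemma gauss_nonneg (μ σ x : ℝ) (hσ : 0 < σ) : 0 ≤ gaussDensity μ σ x := by
  unfold gaussDensity
  positivity

lemma gauss_cont (μ σ : ℝ) : Continuous (gaussDensity μ σ) := by
  unfold gaussDensity
  exact continuous_const.mul (Real.continuous_exp.comp (by continuity))

lemma wn_eq (μ σ x : ℝ) : wnDensity μ σ x = ∑' k : ℤ, gaussDensity (μ + 2 * π * (k : ℝ)) σ x := by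
  unfold wnDensity gaussDensity
  rw [tsum_mul_left]
  congr 1
  refine (((Equiv.neg ℤ).tsum_eq _).symm.trans (tsum_congr fun k => ?_))
  simp only [Equiv.neg_apply, Int.cast_neg]
  congr 1
  ring

lemma summable_gauss (μ σ x : ℝ) (hσ : 0 < σ) :
    Summable fun k : ℤ => gaussDensity (μ + 2 * π * (k : ℝ)) σ x :=
  (summable_sub μ σ x hσ).mul_left _

lemma gauss_mul (a b σ₁ σ₂ : ℝ) (h1 : 0 < σ₁) (h2 : 0 < σ₂) (x : ℝ) :
    gaussDensity a σ₁ x * gaussDensity b σ₂ x =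
      (Real.exp (-(a - b) ^ 2 / (2 * (σ₁ ^ 2 + σ₂ ^ 2))) /
          Real.sqrt (2 * π * (σ₁ ^ 2 + σ₂ ^ 2))) *
        gaussDensity ((a * σ₂ ^ 2 + b * σ₁ ^ 2) / (σ₁ ^ 2 + σ₂ ^ 2))
          (Real.sqrt (σ₁ ^ 2 * σ₂ ^ 2 / (σ₁ ^ 2 + σ₂ ^ 2))) x := by
  have hπ := Real.pi_pos
  have hs : 0 < σ₁ ^ 2 + σ₂ ^ 2 := by positivity
  set s := σ₁ ^ 2 + σ₂ ^ 2 with hsdef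
  set σb := Real.sqrt (σ₁ ^ 2 * σ₂ ^ 2 / s) with hσb
  have hσb2 : σb ^ 2 = σ₁ ^ 2 * σ₂ ^ 2 / s := Real.sq_sqrt (by positivity)
  have hσbpos : 0 < σb := Real.sqrt_pos.mpr (by positivity)
  have hexp : -(x - a) ^ 2 / (2 * σ₁ ^ 2) + -(x - b) ^ 2 / (2 * σ₂ ^ 2) =
      -(a - b) ^ 2 / (2 * s) +
        -(x - (a * σ₂ ^ 2 + b * σ₁ ^ 2) / s) ^ 2 / (2 * σb ^ 2) := by
    rw [hσb2, hsdef]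
    field_simp
    ring
  have hc : (1 / (Real.sqrt (2 * π) * σ₁)) * (1 / (Real.sqrt (2 * π) * σ₂)) =
      (1 / Real.sqrt (2 * π * s)) * (1 / (Real.sqrt (2 * π) * σb)) := by
    rw [div_mul_div_comm, div_mul_div_comm, one_mul]
    congr 1
    have l1 : Real.sqrt (2 * π) * σ₁ * (Real.sqrt (2 * π) * σ₂) = 2 * π * (σ₁ * σ₂) := by
      rw [mul_mul_mul_comm, Real.mul_self_sqrt (by positivity)]
    have l2 : Real.sqrt (2 * π * s) * (Real.sqrt (2 * π) * σb) = 2 * π * (σ₁ * σ₂) := by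
      rw [hσb, ← Real.sqrt_mul (by positivity), ← Real.sqrt_mul (by positivity),
        show 2 * π * s * (2 * π * (σ₁ ^ 2 * σ₂ ^ 2 / s)) = (2 * π * (σ₁ * σ₂)) ^ 2 by
          field_simp]
      exact Real.sqrt_sq (by positivity)
    rw [l1, l2]
  unfold gaussDensity
  calc (1 / (Real.sqrt (2 * π) * σ₁)) * Real.exp (-(x - a) ^ 2 / (2 * σ₁ ^ 2)) *
        ((1 / (Real.sqrt (2 * π) * σ₂)) * Real.exp (-(x - b) ^ 2 / (2 * σ₂ ^ 2)))
      = ((1 / (Real.sqrt (2 * π) * σ₁)) * (1 / (Real.sqrt (2 * π) * σ₂))) *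
          Real.exp (-(x - a) ^ 2 / (2 * σ₁ ^ 2) + -(x - b) ^ 2 / (2 * σ₂ ^ 2)) := by
        rw [Real.exp_add]; ring
    _ = ((1 / Real.sqrt (2 * π * s)) * (1 / (Real.sqrt (2 * π) * σb))) *
          Real.exp (-(a - b) ^ 2 / (2 * s) +
            -(x - (a * σ₂ ^ 2 + b * σ₁ ^ 2) / s) ^ 2 / (2 * σb ^ 2)) := by
        rw [hc, hexp]
    _ = _ := by rw [Real.exp_add]; ring

lemma wn_bound (μ σ : ℝ) (hσ : 0 < σ) :
    ∃ M : ℝ, 0 ≤ M ∧ ∀ x ∈ Set.Icc (0 : ℝ) (2 * π), wnDensity μ σ x ≤ M := by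
  have hπ := Real.pi_pos
  set C := 2 * π * (|μ| + 2 * π) / σ ^ 2 with hC
  set D := 2 * π ^ 2 / σ ^ 2 with hD
  have hsum : Summable fun k : ℤ => Real.exp (C * |(k : ℝ)| - D * (k : ℝ) ^ 2) :=
    summable_aux C (by positivity)
  refine ⟨(1 / (Real.sqrt (2 * π) * σ)) * ∑' k : ℤ, Real.exp (C * |(k : ℝ)| - D * (k : ℝ) ^ 2),
    mul_nonneg (by positivity) (tsum_nonneg fun k => (Real.exp_pos _).le), fun x hx => ?_⟩
  unfold wnDensity
  have hR : |x - μ| ≤ |μ| + 2 * π := by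
    have h1 : |x| ≤ 2 * π := abs_le.mpr ⟨by linarith [hx.1], hx.2⟩
    calc |x - μ| ≤ |x| + |μ| := abs_sub _ _
      _ ≤ |μ| + 2 * π := by linarith
  refine mul_le_mul_of_nonneg_left ((summable_wn_term μ σ x hσ).tsum_le_tsum (fun k => ?_) hsum)
    (by positivity)
  have h := exp_term_le (a := x - μ) hR hσ ((k : ℝ))
  simpa [show x - μ + 2 * π * (k:ℝ) = (x - μ) + 2 * π * ((k:ℝ)) by ring] using h

lemma wn_nonneg (μ σ x : ℝ) (hσ : 0 < σ) : 0 ≤ wnDensity μ σ x :=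
  mul_nonneg (by positivity) (tsum_nonneg fun k => (Real.exp_pos _).le)


set_option maxHeartbeats 1000000 in
/-- Unnormalized first circular moment of the product of two wrapped normal densities. -/
theorem wn_product_moment_integral (μ₁ μ₂ σ₁ σ₂ : ℝ) (hσ₁ : 0 < σ₁) (hσ₂ : 0 < σ₂)
    (μjk : ℤ → ℤ → ℝ) (σbar : ℝ) (w : ℤ → ℤ → ℝ)
    (hμjk : ∀ j k : ℤ, μjk j k =
      ((μ₁ + 2 * Real.pi * (j : ℝ)) * σ₂ ^ 2 + (μ₂ + 2 * Real.pi * (k : ℝ)) * σ₁ ^ 2) /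
        (σ₁ ^ 2 + σ₂ ^ 2))
    (hσbar : σbar = Real.sqrt (σ₁ ^ 2 * σ₂ ^ 2 / (σ₁ ^ 2 + σ₂ ^ 2)))
    (hw : ∀ j k : ℤ, w j k =
      Real.exp (-((μ₁ + 2 * Real.pi * (j : ℝ)) - (μ₂ + 2 * Real.pi * (k : ℝ))) ^ 2 /
          (2 * (σ₁ ^ 2 + σ₂ ^ 2))) / Real.sqrt (2 * Real.pi * (σ₁ ^ 2 + σ₂ ^ 2))) :
    ∫ x in (0 : ℝ)..(2 * Real.pi),
        Complex.exp (Complex.I * (x : ℂ)) * ((wnDensity μ₁ σ₁ x * wnDensity μ₂ σ₂ x : ℝ) : ℂ) =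
      ∑' p : ℤ × ℤ, (w p.1 p.2 : ℂ) *
        ∫ x in (0 : ℝ)..(2 * Real.pi),
          Complex.exp (Complex.I * (x : ℂ)) * ((gaussDensity (μjk p.1 p.2) σbar x : ℝ) : ℂ) := by
  have hπ := Real.pi_pos
  have hs : 0 < σ₁ ^ 2 + σ₂ ^ 2 := by positivity
  have h2π : (0 : ℝ) ≤ 2 * π := by positivity
  have hσbpos : 0 < σbar := by rw [hσbar]; exact Real.sqrt_pos.mpr (by positivity)
  have hwnn : ∀ j k : ℤ, 0 ≤ w j k := fun j k => by rw [hw]; positivity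
  have hprod : ∀ (x : ℝ) (p : ℤ × ℤ),
      gaussDensity (μ₁ + 2 * π * (p.1 : ℝ)) σ₁ x * gaussDensity (μ₂ + 2 * π * (p.2 : ℝ)) σ₂ x =
        w p.1 p.2 * gaussDensity (μjk p.1 p.2) σbar x := by
    intro x p
    rw [hw, hμjk, hσbar]
    exact gauss_mul _ _ _ _ hσ₁ hσ₂ x
  have hsum1 : ∀ x : ℝ, Summable fun j : ℤ => gaussDensity (μ₁ + 2 * π * (j : ℝ)) σ₁ x :=
    fun x => summable_gauss _ _ _ hσ₁
  have hsum2 : ∀ x : ℝ, Summable fun k : ℤ => gaussDensity (μ₂ + 2 * π * (k : ℝ)) σ₂ x :=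
    fun x => summable_gauss _ _ _ hσ₂
  have hsum12 : ∀ x : ℝ, Summable fun p : ℤ × ℤ =>
      gaussDensity (μ₁ + 2 * π * (p.1 : ℝ)) σ₁ x * gaussDensity (μ₂ + 2 * π * (p.2 : ℝ)) σ₂ x :=
    fun x => Summable.mul_of_nonneg (hsum1 x) (hsum2 x)
      (fun j => gauss_nonneg _ _ _ hσ₁) (fun k => gauss_nonneg _ _ _ hσ₂)
  have hwsum : ∀ x : ℝ, Summable fun p : ℤ × ℤ =>
      w p.1 p.2 * gaussDensity (μjk p.1 p.2) σbar x :=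
    fun x => (hsum12 x).congr (fun p => hprod x p)
  have hpt : ∀ x : ℝ, wnDensity μ₁ σ₁ x * wnDensity μ₂ σ₂ x =
      ∑' p : ℤ × ℤ, w p.1 p.2 * gaussDensity (μjk p.1 p.2) σbar x := by
    intro x
    rw [wn_eq, wn_eq, Summable.tsum_mul_tsum (hsum1 x) (hsum2 x) (hsum12 x)]
    exact tsum_congr fun p => hprod x p
  set F : ℤ × ℤ → ℝ → ℂ := fun p x => Complex.exp (Complex.I * (x : ℂ)) *
      ((w p.1 p.2 * gaussDensity (μjk p.1 p.2) σbar x : ℝ) : ℂ) with hF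
  have hFm : ∀ p : ℤ × ℤ, AEStronglyMeasurable (F p)
      (volume.restrict (Set.Ioc (0 : ℝ) (2 * π))) := by
    intro p
    apply Continuous.aestronglyMeasurable
    exact (Complex.continuous_exp.comp (continuous_const.mul Complex.continuous_ofReal)).mul
      (Complex.continuous_ofReal.comp (continuous_const.mul (gauss_cont _ _)))
  have hexpnorm : ∀ x : ℝ, ‖Complex.exp (Complex.I * (x : ℂ))‖ = 1 := by
    intro x
    rw [Complex.norm_exp]
    simp
  have hnorm : ∀ (p : ℤ × ℤ) (x : ℝ), (‖F p x‖₊ : ℝ≥0∞) =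
      ENNReal.ofReal (w p.1 p.2 * gaussDensity (μjk p.1 p.2) σbar x) := by
    intro p x
    rw [show ((‖F p x‖₊ : ℝ≥0∞)) = ENNReal.ofReal ‖F p x‖ from (ofReal_norm _).symm]
    congr 1
    rw [hF]
    simp only
    rw [norm_mul, hexpnorm, one_mul, Complex.norm_real, Real.norm_eq_abs,
      abs_of_nonneg (mul_nonneg (hwnn _ _) (gauss_nonneg _ _ _ hσbpos))]
  have hbnd : ∑' p : ℤ × ℤ, ∫⁻ x in Set.Ioc (0 : ℝ) (2 * π), ‖F p x‖₊ ≠ ⊤ := by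
    obtain ⟨M₁, hM₁0, hM₁⟩ := wn_bound μ₁ σ₁ hσ₁
    obtain ⟨M₂, hM₂0, hM₂⟩ := wn_bound μ₂ σ₂ hσ₂
    have hmeas : ∀ p : ℤ × ℤ, AEMeasurable
        (fun x => ENNReal.ofReal (w p.1 p.2 * gaussDensity (μjk p.1 p.2) σbar x))
        (volume.restrict (Set.Ioc (0 : ℝ) (2 * π))) := fun p =>
      (ENNReal.measurable_ofReal.comp
        ((continuous_const.mul (gauss_cont _ _)).measurable)).aemeasurable
    have e1 : ∑' p : ℤ × ℤ, ∫⁻ x in Set.Ioc (0 : ℝ) (2 * π), ‖F p x‖₊ =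
        ∫⁻ x in Set.Ioc (0 : ℝ) (2 * π),
          ENNReal.ofReal (wnDensity μ₁ σ₁ x * wnDensity μ₂ σ₂ x) := by
      simp_rw [hnorm]
      rw [← lintegral_tsum hmeas]
      refine lintegral_congr fun x => ?_
      rw [← ENNReal.ofReal_tsum_of_nonneg
        (fun p => mul_nonneg (hwnn _ _) (gauss_nonneg _ _ _ hσbpos)) (hwsum x), hpt x]
    rw [e1]
    refine ne_of_lt (lt_of_le_of_lt
      (setLIntegral_mono (g := fun _ => ENNReal.ofReal (M₁ * M₂)) measurable_const
        fun x hx => ?_) ?_)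
    · exact ENNReal.ofReal_le_ofReal (mul_le_mul (hM₁ x ⟨hx.1.le, hx.2⟩)
        (hM₂ x ⟨hx.1.le, hx.2⟩) (wn_nonneg _ _ _ hσ₂) hM₁0)
    · rw [setLIntegral_const, Real.volume_Ioc]
      exact ENNReal.mul_lt_top ENNReal.ofReal_lt_top ENNReal.ofReal_lt_top
  have key1 : ∀ x : ℝ, Complex.exp (Complex.I * (x : ℂ)) *
      ((wnDensity μ₁ σ₁ x * wnDensity μ₂ σ₂ x : ℝ) : ℂ) = ∑' p : ℤ × ℤ, F p x := by
    intro x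
    rw [hpt x, Complex.ofReal_tsum, ← tsum_mul_left]
  simp only [intervalIntegral.integral_of_le h2π]
  rw [MeasureTheory.integral_congr_ae (Filter.Eventually.of_forall fun x => key1 x),
    MeasureTheory.integral_tsum hFm hbnd]
  refine tsum_congr fun p => ?_
  rw [← MeasureTheory.integral_const_mul]
  refine MeasureTheory.integral_congr_ae (Filter.Eventually.of_forall fun x => ?_)
  rw [hF]
  push_cast
  ring
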